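/- arXiv:2212.08154 — 2 statements merged into one kernel-verified Lean document; each statement's English description precedes it below -/
import Mathlib

section
/- Let H and V be finite-dimensional real inner product spaces with V ≠ 0 and let A : H × H → V be an ℝ-bilinear alternating fat map. Then dim H is even. -/
/-- The pointwise fatness condition: for every nonzero horizontal vector `X`,
the adjoint `A_X^* : V → H` of `A_X := A X : H → V` is injective. -/
def IsFat {H V : Type*} [NormedAddCommGroup H] [InnerProductSpace ℝ H]
    [FiniteDimensional ℝ H] [NormedAddCommGroup V] [InnerProductSpace ℝ V]
    [FiniteDimensional ℝ V] (A : H →ₗ[ℝ] H →ₗ[ℝ] V) : Prop :=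
  ∀ X : H, X ≠ 0 → Function.Injective (LinearMap.adjoint (A X))

/-- If `A : H × H → V` is an alternating fat bilinear map with `V ≠ 0`, then
`dim H` is even. -/
theorem fat_dim_even {H V : Type*}
    [NormedAddCommGroup H] [InnerProductSpace ℝ H] [FiniteDimensional ℝ H]
    [NormedAddCommGroup V] [InnerProductSpace ℝ V] [FiniteDimensional ℝ V]
    [Nontrivial V]
    (A : H →ₗ[ℝ] H →ₗ[ℝ] V) (hAlt : ∀ X : H, A X X = 0) (hFat : IsFat A) :
    Even (Module.finrank ℝ H) := by
  obtain ⟨v, hv⟩ := exists_ne (0 : V)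
  -- the real bilinear form B X Y = ⟪v, A X Y⟫
  set B : LinearMap.BilinForm ℝ H :=
    LinearMap.mk₂ ℝ (fun X Y => inner ℝ v (A X Y))
      (by intros; simp [inner_add_right]) (by intros; simp [real_inner_smul_right])
      (by intros; simp [inner_add_right]) (by intros; simp [real_inner_smul_right]) with hB
  have hBapp : ∀ X Y : H, B X Y = inner ℝ v (A X Y) := fun X Y => rfl
  -- B is nondegenerate
  have hnd : B.SeparatingLeft := by
    intro X hX
    by_contra hX0
    have h1 : LinearMap.adjoint (A X) v = 0 := by
      have := hX (LinearMap.adjoint (A X) v)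
      rw [hBapp, ← LinearMap.adjoint_inner_left] at this
      exact inner_self_eq_zero.mp this
    have := hFat X hX0 (a₁ := v) (a₂ := 0) (by simpa using h1)
    exact hv this
  -- B is skew
  have hskew : ∀ X Y : H, B Y X = - B X Y := by
    intro X Y
    have h := hAlt (X + Y)
    have h2 : A X Y + A Y X = 0 := by
      simpa [hAlt] using h
    have : inner ℝ v (A X Y + A Y X) = (0 : ℝ) := by rw [h2, inner_zero_right]
    rw [inner_add_right] at this
    rw [hBapp, hBapp]; linarith
  -- pass to matrices
  set n := Module.finrank ℝ H
  set b := Module.finBasis ℝ H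
  set M := BilinForm.toMatrix b B with hM
  have hdet : M.det ≠ 0 := (LinearMap.BilinForm.nondegenerate_iff_det_ne_zero b).mp
    ((LinearMap.IsRefl.nondegenerate_iff_separatingLeft
      (fun X Y h => by rw [hskew X Y, h, neg_zero])).mpr hnd)
  have hMT : M.transpose = -M := by
    ext i j
    simp only [Matrix.transpose_apply, Matrix.neg_apply, hM, BilinForm.toMatrix_apply]
    exact hskew _ _
  by_contra hodd
  have hodd' : Odd n := Nat.not_even_iff_odd.mp hodd
  have : M.det = -M.det := by
    conv_lhs => rw [← Matrix.det_transpose, hMT, Matrix.det_neg]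
    rw [Fintype.card_fin, hodd'.neg_one_pow]
    ring
  apply hdet
  linarith
end

section
/- Let H and V be finite-dimensional real inner product spaces and let A : H × H → V be an ℝ-bilinear alternating fat map with dim V ≥ 2. Then dim H is divisible by 4. -/
open Module Matrix

lemma even_finrank_of_alt_nondeg {W : Type*} [AddCommGroup W] [Module ℂ W]
    [FiniteDimensional ℂ W] (B : LinearMap.BilinForm ℂ W)
    (halt : ∀ x, B x x = 0) (hnd : B.Nondegenerate) :
    Even (finrank ℂ W) := by
  classical
  by_contra hodd
  rw [Nat.not_even_iff_odd] at hodd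
  have hskew : ∀ x y, B x y = -B y x := fun x y => by
    have h := halt (x + y)
    simp only [map_add, LinearMap.add_apply, halt] at h
    linear_combination h
  set b := finBasis ℂ W
  set G := LinearMap.BilinForm.toMatrix b B with hG
  have hdet : G.det ≠ 0 := (LinearMap.BilinForm.nondegenerate_iff_det_ne_zero b).mp hnd
  have hGt : Gᵀ = -G := by
    ext i j
    simp only [Matrix.transpose_apply, Matrix.neg_apply, hG,
      LinearMap.BilinForm.toMatrix_apply]
    exact hskew (b j) (b i)
  have h1 : G.det = (-1 : ℂ) ^ (finrank ℂ W) * G.det := by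
    conv_lhs => rw [← Matrix.det_transpose, hGt]
    rw [Matrix.det_neg]
    simp
  rw [hodd.neg_one_pow] at h1
  apply hdet
  linear_combination (1/2 : ℂ) * h1

lemma ortho_key {F : Type*} [AddCommGroup F] [Module ℂ F]
    (β : LinearMap.BilinForm ℂ F)
    (T : Module.End ℂ F) (hsa : ∀ x y, β (T x) y = β x (T y)) :
    ∀ N : ℕ, ∀ μ ν : ℂ, μ ≠ ν → ∀ k l : ℕ, k + l ≤ N →
      ∀ x y, ((T - μ • 1) ^ k) x = 0 → ((T - ν • 1) ^ l) y = 0 → β x y = 0 := by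
  intro N
  induction N with
  | zero =>
    intro μ ν hne k l hkl x y hx hy
    have hk0 : k = 0 := by omega
    subst hk0
    simp only [pow_zero, Module.End.one_apply] at hx
    simp [hx]
  | succ N ih =>
    intro μ ν hne k l hkl x y hx hy
    rcases Nat.eq_zero_or_pos k with hk0 | hkpos
    · subst hk0
      simp only [pow_zero, Module.End.one_apply] at hx
      simp [hx]
    rcases Nat.eq_zero_or_pos l with hl0 | hlpos
    · subst hl0
      simp only [pow_zero, Module.End.one_apply] at hy
      simp [hy]
    obtain ⟨k', rfl⟩ : ∃ k', k = k' + 1 := ⟨k - 1, by omega⟩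
    obtain ⟨l', rfl⟩ : ∃ l', l = l' + 1 := ⟨l - 1, by omega⟩
    have hx' : ((T - μ • 1) ^ k') ((T - μ • 1) x) = 0 := by
      rw [← Module.End.mul_apply, ← pow_succ]
      exact hx
    have hy' : ((T - ν • 1) ^ l') ((T - ν • 1) y) = 0 := by
      rw [← Module.End.mul_apply, ← pow_succ]
      exact hy
    have h1 : β ((T - μ • 1) x) y = 0 := ih μ ν hne k' (l' + 1) (by omega) _ y hx' hy
    have h2 : β x ((T - ν • 1) y) = 0 := ih μ ν hne (k' + 1) l' (by omega) x _ hx hy'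
    have he1 : β (T x) y - μ * β x y = 0 := by
      have : (T - μ • 1) x = T x - μ • x := by
        simp [LinearMap.sub_apply]
      rw [this] at h1
      simpa [map_sub, LinearMap.map_smul, smul_eq_mul] using h1
    have he2 : β x (T y) - ν * β x y = 0 := by
      have : (T - ν • 1) y = T y - ν • y := by
        simp [LinearMap.sub_apply]
      rw [this] at h2
      simpa [map_sub, LinearMap.map_smul, smul_eq_mul] using h2
    have hz : (ν - μ) * β x y = 0 := by
      linear_combination he1 - he2 - hsa x y
    rcases mul_eq_zero.mp hz with h | h
    · exact absurd (sub_eq_zero.mp h).symm hne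
    · exact h

section
variable {F : Type*} [AddCommGroup F] [Module ℂ F] [FiniteDimensional ℂ F]

lemma core_complex (β : LinearMap.BilinForm ℂ F) (halt : ∀ x : F, β x x = 0)
    (hnd : β.Nondegenerate)
    (T : Module.End ℂ F) (hsa : ∀ x y, β (T x) y = β x (T y))
    (hmult : ∀ μ : ℂ, finrank ℂ (T.maxGenEigenspace μ)
      = finrank ℂ (T.maxGenEigenspace ((starRingEnd ℂ) μ)))
    (hnoreal : ∀ μ : ℂ, μ.im = 0 → T.maxGenEigenspace μ = ⊥) :
    4 ∣ finrank ℂ F := by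
  classical
  have ortho : ∀ μ ν : ℂ, μ ≠ ν → ∀ x ∈ T.maxGenEigenspace μ,
      ∀ y ∈ T.maxGenEigenspace ν, β x y = 0 := by
    intro μ ν hne x hx y hy
    rw [Module.End.mem_maxGenEigenspace] at hx hy
    obtain ⟨k, hk⟩ := hx
    obtain ⟨l, hl⟩ := hy
    exact ortho_key β T hsa (k + l) μ ν hne k l le_rfl x y hk hl
  -- each generalized eigenspace has even dimension
  have heven : ∀ μ : ℂ, Even (finrank ℂ (T.maxGenEigenspace μ)) := by
    intro μ
    set Wμ := T.maxGenEigenspace μ with hWμ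
    let βr : LinearMap.BilinForm ℂ Wμ :=
      LinearMap.mk₂ ℂ (fun x y : Wμ => β (x : F) (y : F))
        (fun x x' y => by simp)
        (fun c x y => by simp [_root_.map_smul])
        (fun x y y' => by simp)
        (fun c x y => by simp [_root_.map_smul])
    have haltr : ∀ x : Wμ, βr x x = 0 := fun x => halt (x : F)
    have hndr : βr.Nondegenerate := by
      refine LinearMap.BilinForm.Nondegenerate.ofSeparatingLeft ?_
      intro x hx
      have hall : ∀ y : F, β (x : F) y = 0 := by
        intro y
        have hy : y ∈ ⨆ ν, T.maxGenEigenspace ν := by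
          rw [Module.End.iSup_maxGenEigenspace_eq_top T]
          exact Submodule.mem_top
        refine Submodule.iSup_induction (motive := fun z => β (x : F) z = 0) _ hy ?_ ?_ ?_
        · intro ν z hz
          by_cases hc : ν = μ
          · subst hc
            exact hx ⟨z, hz⟩
          · exact ortho μ ν (Ne.symm hc) (x : F) x.2 z hz
        · simp
        · intro a b ha hb
          simp [ha, hb]
      exact Subtype.ext (hnd.1 _ hall)
    exact even_finrank_of_alt_nondeg βr haltr hndr
  -- decomposition
  have hInd := T.independent_maxGenEigenspace
  have hfin : {μ : ℂ | T.maxGenEigenspace μ ≠ ⊥}.Finite :=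
    WellFoundedGT.finite_ne_bot_of_iSupIndep hInd
  set s : Finset ℂ := hfin.toFinset with hs
  have hmem : ∀ μ : ℂ, μ ∈ s ↔ T.maxGenEigenspace μ ≠ ⊥ := by
    intro μ; simp [hs, Set.Finite.mem_toFinset]
  have hInd' : iSupIndep (fun i : ↥s => T.maxGenEigenspace (i : ℂ)) :=
    hInd.comp Subtype.val_injective
  have hTop' : ⨆ i : ↥s, T.maxGenEigenspace (i : ℂ) = ⊤ := by
    rw [← Module.End.iSup_maxGenEigenspace_eq_top T]
    refine le_antisymm (iSup_le fun i => le_iSup _ (i : ℂ)) ?_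
    apply iSup_le
    intro μ
    by_cases h : T.maxGenEigenspace μ = ⊥
    · simp [h]
    · exact le_iSup_of_le ⟨μ, (hmem μ).mpr h⟩ le_rfl
  have hint := DirectSum.isInternal_submodule_of_iSupIndep_of_iSup_eq_top hInd' hTop'
  let bB := hint.collectedBasis (fun i => finBasis ℂ (T.maxGenEigenspace (i : ℂ)))
  have hcard : finrank ℂ F = ∑ i : ↥s, finrank ℂ (T.maxGenEigenspace (i : ℂ)) := by
    rw [finrank_eq_card_basis bB, Fintype.card_sigma]
    simp
  rw [hcard, Finset.sum_coe_sort s (fun μ => finrank ℂ (T.maxGenEigenspace μ))]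
  have him : ∀ μ ∈ s, μ.im ≠ 0 := fun μ hμ h0 => ((hmem μ).mp hμ) (hnoreal μ h0)
  have hconjmem : ∀ μ ∈ s, (starRingEnd ℂ) μ ∈ s := by
    intro μ hμ
    rw [hmem] at hμ ⊢
    intro hbot
    apply hμ
    rw [← Submodule.finrank_eq_zero (R := ℂ), hmult μ, hbot, finrank_bot]
  set f : ℂ → ℕ := fun μ => finrank ℂ (T.maxGenEigenspace μ) with hf
  have hsplit : s.filter (fun μ => ¬ 0 < μ.im) = s.filter (fun μ => μ.im < 0) := by
    apply Finset.filter_congr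
    intro μ hμ
    have h := him μ hμ
    constructor
    · intro h1; simp only [not_lt] at h1; exact lt_of_le_of_ne h1 h
    · intro h1; simp only [not_lt]; exact le_of_lt h1
  have htot : ∑ μ ∈ s, f μ = ∑ μ ∈ s.filter (fun μ => 0 < μ.im), f μ
      + ∑ μ ∈ s.filter (fun μ => μ.im < 0), f μ := by
    rw [← hsplit, Finset.sum_filter_add_sum_filter_not]
  have hbij : ∑ μ ∈ s.filter (fun μ => μ.im < 0), f μ
      = ∑ μ ∈ s.filter (fun μ => 0 < μ.im), f μ := by
    refine Finset.sum_nbij' (fun μ => (starRingEnd ℂ) μ) (fun μ => (starRingEnd ℂ) μ)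
      ?_ ?_ ?_ ?_ ?_
    · intro a ha
      rw [Finset.mem_filter] at ha ⊢
      exact ⟨hconjmem a ha.1, by simp only [Complex.conj_im]; linarith [ha.2]⟩
    · intro a ha
      rw [Finset.mem_filter] at ha ⊢
      exact ⟨hconjmem a ha.1, by simp only [Complex.conj_im]; linarith [ha.2]⟩
    · intro a _; exact Complex.conj_conj a
    · intro a _; exact Complex.conj_conj a
    · intro a _; exact hmult a
  have h2 : 2 ∣ ∑ μ ∈ s.filter (fun μ => 0 < μ.im), f μ :=
    Finset.dvd_sum (fun μ _ => (heven μ).two_dvd)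
  obtain ⟨m, hm⟩ := h2
  rw [htot, hbij, hm]
  omega

end


lemma star_mulVec_real {d : ℕ} (M : Matrix (Fin d) (Fin d) ℝ) (x : Fin d → ℂ) :
    (M.map Complex.ofReal).mulVec (star x) = star ((M.map Complex.ofReal).mulVec x) := by
  ext i
  simp only [Matrix.mulVec, dotProduct, Pi.star_apply]
  rw [star_sum]
  congr 1
  ext j
  simp [Matrix.map_apply, star_mul', Complex.star_def, Complex.conj_ofReal]

lemma core_real {d : ℕ} (C M : Matrix (Fin d) (Fin d) ℝ)
    (hCskew : Cᵀ = -C) (hCdet : C.det ≠ 0)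
    (hsa : Mᵀ * C = C * M)
    (hnr : ∀ lam : ℝ, (M - lam • 1).det ≠ 0) :
    4 ∣ d := by
  classical
  set Cc : Matrix (Fin d) (Fin d) ℂ := C.map Complex.ofReal with hCc
  set Mc : Matrix (Fin d) (Fin d) ℂ := M.map Complex.ofReal with hMc
  have hmapC : Cc = Complex.ofRealHom.mapMatrix C := rfl
  have hmapM : Mc = Complex.ofRealHom.mapMatrix M := rfl
  have hCcskew : Ccᵀ = -Cc := by
    ext i j
    have := congrFun (congrFun hCskew i) j
    simp only [Matrix.transpose_apply, Matrix.neg_apply] at this ⊢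
    simp only [hCc, Matrix.map_apply, this, Complex.ofReal_neg]
  have hCcdet : Cc.det ≠ 0 := by
    rw [hmapC, ← RingHom.map_det]
    simpa using hCdet
  have hsac : Mcᵀ * Cc = Cc * Mc := by
    rw [hmapC, hmapM]
    have h1 : (Complex.ofRealHom.mapMatrix M)ᵀ = Complex.ofRealHom.mapMatrix Mᵀ := by
      simp [RingHom.mapMatrix_apply, Matrix.transpose_map]
    rw [h1, ← RingHom.map_mul, ← RingHom.map_mul, hsa]
  set β : LinearMap.BilinForm ℂ (Fin d → ℂ) := Matrix.toBilin' Cc with hβ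
  set T : Module.End ℂ (Fin d → ℂ) := Matrix.mulVecLin Mc with hT
  have halt : ∀ x, β x x = 0 := by
    intro x
    have h : β x x = x ⬝ᵥ Cc.mulVec x := Matrix.toBilin'_apply' _ _ _
    have h2 : x ⬝ᵥ Cc.mulVec x = -(x ⬝ᵥ Cc.mulVec x) := by
      conv_lhs => rw [Matrix.dotProduct_mulVec, ← Matrix.mulVec_transpose, hCcskew,
        Matrix.neg_mulVec, neg_dotProduct, dotProduct_comm]
    rw [h]
    linear_combination (1/2 : ℂ) * h2
  have hnd : β.Nondegenerate := by
    rw [hβ, Matrix.nondegenerate_toBilin'_iff, Matrix.nondegenerate_iff_det_ne_zero]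
    exact hCcdet
  have hsaβ : ∀ x y, β (T x) y = β x (T y) := by
    intro x y
    rw [hβ, Matrix.toBilin'_apply', Matrix.toBilin'_apply']
    show (Mc.mulVec x) ⬝ᵥ Cc.mulVec y = x ⬝ᵥ Cc.mulVec (Mc.mulVec y)
    calc (Mc.mulVec x) ⬝ᵥ (Cc.mulVec y)
        = Matrix.vecMul (Mc.mulVec x) Cc ⬝ᵥ y := Matrix.dotProduct_mulVec _ _ _
      _ = Matrix.vecMul (Matrix.vecMul x Mcᵀ) Cc ⬝ᵥ y := by rw [Matrix.vecMul_transpose]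
      _ = Matrix.vecMul x (Mcᵀ * Cc) ⬝ᵥ y := by rw [Matrix.vecMul_vecMul]
      _ = Matrix.vecMul x (Cc * Mc) ⬝ᵥ y := by rw [hsac]
      _ = x ⬝ᵥ ((Cc * Mc).mulVec y) := (Matrix.dotProduct_mulVec _ _ _).symm
      _ = x ⬝ᵥ (Cc.mulVec (Mc.mulVec y)) := by rw [Matrix.mulVec_mulVec]
  -- auxiliary: powers of mulVecLin
  have mulVecLin_pow : ∀ (A : Matrix (Fin d) (Fin d) ℂ) (k : ℕ),
      (A.mulVecLin) ^ k = (A ^ k).mulVecLin := by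
    intro A k
    induction k with
    | zero => simp [Matrix.mulVecLin_one]; rfl
    | succ k ih => rw [pow_succ, pow_succ, Matrix.mulVecLin_mul, ih]; rfl
  have hTsub : ∀ μ : ℂ, T - μ • 1 = (Mc - μ • 1).mulVecLin := by
    intro μ
    refine LinearMap.ext fun x => ?_
    simp only [LinearMap.sub_apply, LinearMap.smul_apply, Module.End.one_apply, hT,
      Matrix.mulVecLin_apply, Matrix.sub_mulVec, Matrix.smul_mulVec, Matrix.one_mulVec]
  have hnoreal : ∀ μ : ℂ, μ.im = 0 → T.maxGenEigenspace μ = ⊥ := by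
    intro μ hμ
    have hdetc : (Mc - μ • 1).det ≠ 0 := by
      have hμre : μ = (μ.re : ℂ) := Complex.ext rfl (by simp [hμ])
      have hmat : Mc - μ • 1 = Complex.ofRealHom.mapMatrix (M - μ.re • 1) := by
        ext i j
        simp only [Matrix.sub_apply, Matrix.smul_apply, Matrix.one_apply,
          RingHom.mapMatrix_apply, Matrix.map_apply, hMc]
        rw [hμre]
        by_cases h : i = j <;> simp [h, smul_eq_mul]
      rw [hmat, ← RingHom.map_det]
      simpa using hnr μ.re
    rw [eq_bot_iff]
    intro x hx
    rw [Module.End.mem_maxGenEigenspace] at hx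
    obtain ⟨k, hk⟩ := hx
    rw [hTsub, mulVecLin_pow] at hk
    simp only [Submodule.mem_bot]
    by_contra hx0
    have : ((Mc - μ • 1) ^ k).det = 0 :=
      Matrix.exists_mulVec_eq_zero_iff.mp ⟨x, hx0, hk⟩
    rw [Matrix.det_pow] at this
    exact hdetc (pow_eq_zero_iff'.mp this).1
  -- conjugation symmetry
  have hstarT : ∀ (μ : ℂ) (k : ℕ) (x : Fin d → ℂ),
      ((T - (starRingEnd ℂ) μ • 1) ^ k) (star x) = star (((T - μ • 1) ^ k) x) := by
    intro μ k
    induction k with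
    | zero => intro x; simp
    | succ k ih =>
      intro x
      have hstep : ∀ z : Fin d → ℂ,
          (T - (starRingEnd ℂ) μ • 1) (star z) = star ((T - μ • 1) z) := by
        intro z
        have h1 : T (star z) = star (T z) := star_mulVec_real M z
        have h2 : (starRingEnd ℂ) μ • (star z) = star (μ • z) := by
          ext i
          simp [Pi.smul_apply, Pi.star_apply, star_mul', Complex.star_def, mul_comm]
        simp only [LinearMap.sub_apply, LinearMap.smul_apply, Module.End.one_apply]
        rw [h1, h2, ← star_sub]
      rw [pow_succ, Module.End.mul_apply, pow_succ, Module.End.mul_apply, hstep, ih]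
  have hmapsto : ∀ (μ : ℂ), ∀ x ∈ T.maxGenEigenspace μ,
      star x ∈ T.maxGenEigenspace ((starRingEnd ℂ) μ) := by
    intro μ x hx
    rw [Module.End.mem_maxGenEigenspace] at hx ⊢
    obtain ⟨k, hk⟩ := hx
    exact ⟨k, by rw [hstarT μ k x, hk, star_zero]⟩
  have hleR : ∀ μ : ℂ, finrank ℝ (T.maxGenEigenspace μ)
      ≤ finrank ℝ (T.maxGenEigenspace ((starRingEnd ℂ) μ)) := by
    intro μ
    let φ : (T.maxGenEigenspace μ) →ₗ[ℝ] (T.maxGenEigenspace ((starRingEnd ℂ) μ)) :=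
      { toFun := fun x => ⟨star x.1, hmapsto μ x.1 x.2⟩
        map_add' := fun a b => Subtype.ext (by simp [star_add])
        map_smul' := fun r a => Subtype.ext (by simp [star_smul]) }
    have hinj : Function.Injective φ := by
      intro a b hab
      have := congrArg Subtype.val hab
      simp only [φ] at this
      exact Subtype.ext (star_injective this)
    exact LinearMap.finrank_le_finrank_of_injective hinj
  have hmultR : ∀ μ : ℂ, finrank ℝ (T.maxGenEigenspace μ)
      = finrank ℝ (T.maxGenEigenspace ((starRingEnd ℂ) μ)) := by
    intro μ
    refine le_antisymm (hleR μ) ?_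
    have := hleR ((starRingEnd ℂ) μ)
    rwa [Complex.conj_conj] at this
  have hmult : ∀ μ : ℂ, finrank ℂ (T.maxGenEigenspace μ)
      = finrank ℂ (T.maxGenEigenspace ((starRingEnd ℂ) μ)) := by
    intro μ
    have e1 : finrank ℝ ℂ * finrank ℂ (T.maxGenEigenspace μ)
        = finrank ℝ (T.maxGenEigenspace μ) := Module.finrank_mul_finrank ℝ ℂ _
    have e2 : finrank ℝ ℂ * finrank ℂ (T.maxGenEigenspace ((starRingEnd ℂ) μ))
        = finrank ℝ (T.maxGenEigenspace ((starRingEnd ℂ) μ)) :=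
      Module.finrank_mul_finrank ℝ ℂ _
    rw [Complex.finrank_real_complex] at e1 e2
    have := e1.trans ((hmultR μ).trans e2.symm)
    omega
  have h4 := core_complex β halt hnd T hsaβ hmult hnoreal
  rwa [Module.finrank_fin_fun] at h4

open InnerProductSpace



/-- If `A : H × H → V` is an alternating fat bilinear map with `dim V ≥ 2`,
then `dim H` is divisible by `4`. -/
theorem fat_dim_div_four {H V : Type*}
    [NormedAddCommGroup H] [InnerProductSpace ℝ H] [FiniteDimensional ℝ H]
    [NormedAddCommGroup V] [InnerProductSpace ℝ V] [FiniteDimensional ℝ V]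
    (A : H →ₗ[ℝ] H →ₗ[ℝ] V) (hAlt : ∀ X : H, A X X = 0) (hFat : IsFat A)
    (hdim : 2 ≤ Module.finrank ℝ V) :
    4 ∣ Module.finrank ℝ H := by
  classical
  -- two independent vectors in V
  set bV := finBasis ℝ V with hbV
  let i0 : Fin (finrank ℝ V) := ⟨0, by omega⟩
  let i1 : Fin (finrank ℝ V) := ⟨1, by omega⟩
  set v : V := bV i0 with hv
  set w : V := bV i1 with hw
  have hvne : v ≠ 0 := bV.ne_zero i0
  have hwv : ∀ lam : ℝ, w - lam • v ≠ 0 := by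
    intro lam hc
    have h := congrArg (fun z => bV.repr z i1) hc
    have h1 : bV.repr w i1 = 1 := by
      rw [hw, bV.repr_self]; simp
    have h2 : bV.repr v i1 = 0 := by
      rw [hv, bV.repr_self]
      exact Finsupp.single_eq_of_ne (by simp [i0, i1, Fin.ext_iff])
    simp only [_root_.map_sub, _root_.map_smul, _root_.map_zero, Finsupp.sub_apply,
      Finsupp.smul_apply, Finsupp.coe_zero, Pi.zero_apply, smul_eq_mul, h1, h2] at h
    norm_num at h
  -- extension of inner products
  have hext : ∀ x y : H, (∀ z : H, ⟪x, z⟫_ℝ = ⟪y, z⟫_ℝ) → x = y := by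
    intro x y h
    have h2 : ∀ z, ⟪x - y, z⟫_ℝ = 0 := fun z => by
      rw [inner_sub_left, h z, sub_self]
    have h0 := h2 (x - y)
    rwa [inner_self_eq_zero, sub_eq_zero] at h0
  -- skewness of A
  have hskewA : ∀ X Y : H, A X Y = -A Y X := by
    intro X Y
    have h := hAlt (X + Y)
    simp only [_root_.map_add, LinearMap.add_apply, hAlt, zero_add, add_zero] at h
    exact eq_neg_of_add_eq_zero_right h
  -- the family of skew endomorphisms
  let Bop : V → H →ₗ[ℝ] H := fun u =>
    { toFun := fun X => LinearMap.adjoint (A X) u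
      map_add' := fun X Y => by
        refine hext _ _ fun Z => ?_
        rw [inner_add_left, LinearMap.adjoint_inner_left, LinearMap.adjoint_inner_left,
          LinearMap.adjoint_inner_left, _root_.map_add, LinearMap.add_apply, inner_add_right]
      map_smul' := fun c X => by
        refine hext _ _ fun Z => ?_
        rw [RingHom.id_apply, inner_smul_left, LinearMap.adjoint_inner_left,
          LinearMap.adjoint_inner_left, _root_.map_smul, LinearMap.smul_apply, inner_smul_right]
        simp }
  have hB : ∀ (u : V) (X Y : H), ⟪Bop u X, Y⟫_ℝ = ⟪u, A X Y⟫_ℝ := by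
    intro u X Y
    exact LinearMap.adjoint_inner_left (A X) Y u
  have hBlin : ∀ (X : H) (lam : ℝ), Bop w X - lam • Bop v X = Bop (w - lam • v) X := by
    intro X lam
    show _ = LinearMap.adjoint (A X) (w - lam • v)
    rw [_root_.map_sub, _root_.map_smul]
    rfl
  have hBinj : ∀ u : V, u ≠ 0 → Function.Injective (Bop u) := by
    intro u hu
    rw [← LinearMap.ker_eq_bot]
    rw [eq_bot_iff]
    intro X hX
    rw [LinearMap.mem_ker] at hX
    simp only [Submodule.mem_bot]
    by_contra hX0
    refine hu (hFat X hX0 ?_)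
    rw [_root_.map_zero]
    exact hX
  -- invert Bop v
  have hbij : Function.Bijective (Bop v) :=
    ⟨hBinj v hvne, (LinearMap.injective_iff_surjective).mp (hBinj v hvne)⟩
  set e := LinearEquiv.ofBijective (Bop v) hbij with he
  set Kop : H →ₗ[ℝ] H := (e.symm : H →ₗ[ℝ] H).comp (Bop w) with hKop
  have hKey : ∀ x : H, Bop v (Kop x) = Bop w x := by
    intro x
    show e (e.symm (Bop w x)) = Bop w x
    exact e.apply_symm_apply _
  -- the bilinear form
  set β : LinearMap.BilinForm ℝ H := LinearMap.mk₂ ℝ (fun x y => ⟪Bop v x, y⟫_ℝ)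
    (fun x x' y => by
      show ⟪Bop v (x + x'), y⟫_ℝ = ⟪Bop v x, y⟫_ℝ + ⟪Bop v x', y⟫_ℝ
      rw [_root_.map_add, inner_add_left])
    (fun c x y => by
      show ⟪Bop v (c • x), y⟫_ℝ = c • ⟪Bop v x, y⟫_ℝ
      rw [_root_.map_smul, real_inner_smul_left, smul_eq_mul])
    (fun x y y' => by
      show ⟪Bop v x, y + y'⟫_ℝ = ⟪Bop v x, y⟫_ℝ + ⟪Bop v x, y'⟫_ℝ
      rw [inner_add_right])
    (fun c x y => by
      show ⟪Bop v x, c • y⟫_ℝ = c • ⟪Bop v x, y⟫_ℝ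
      rw [real_inner_smul_right, smul_eq_mul]) with hβ
  have hβapp : ∀ x y : H, β x y = ⟪Bop v x, y⟫_ℝ := fun x y => rfl
  have hβskew : ∀ x y : H, β x y = -β y x := by
    intro x y
    rw [hβapp, hβapp, hB, hB, hskewA x y, inner_neg_right]
  have hβnd : β.Nondegenerate := by
    refine LinearMap.BilinForm.Nondegenerate.ofSeparatingLeft ?_
    intro x hx
    have h0 : Bop v x = 0 := by
      have h := hx (Bop v x)
      rw [hβapp] at h
      exact inner_self_eq_zero.mp h
    have := hBinj v hvne
    rw [← LinearMap.ker_eq_bot, eq_bot_iff] at this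
    simpa using this (LinearMap.mem_ker.mpr h0)
  have hβsa : ∀ x y : H, β (Kop x) y = β x (Kop y) := by
    intro x y
    rw [hβapp, hKey, hB, hβskew, hβapp, hKey, hB, hskewA x y, inner_neg_right]
  -- no real eigenvalues
  have hKnoeig : ∀ (lam : ℝ) (x : H), Kop x = lam • x → x = 0 := by
    intro lam x hx
    have h2 : Bop (w - lam • v) x = 0 := by
      rw [← hBlin, ← hKey x, hx, _root_.map_smul, sub_self]
    by_contra hx0
    refine (hwv lam) (hFat x hx0 ?_)
    rw [_root_.map_zero]
    exact h2
  -- to matrices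
  set d := finrank ℝ H with hd
  set bH := finBasis ℝ H with hbH
  set C : Matrix (Fin d) (Fin d) ℝ := LinearMap.BilinForm.toMatrix bH β with hC
  set MK : Matrix (Fin d) (Fin d) ℝ := LinearMap.toMatrix bH bH Kop with hMK
  have hCskew : Cᵀ = -C := by
    ext i j
    simp only [Matrix.transpose_apply, Matrix.neg_apply, hC, LinearMap.BilinForm.toMatrix_apply]
    exact hβskew (bH j) (bH i)
  have hCdet : C.det ≠ 0 := by
    rw [hC]
    exact (LinearMap.BilinForm.nondegenerate_iff_det_ne_zero bH).mp hβnd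
  have hsa : MKᵀ * C = C * MK := by
    have hforms : LinearMap.BilinForm.compLeft β Kop = LinearMap.BilinForm.compRight β Kop := by
      ext x y
      exact hβsa x y
    have := congrArg (LinearMap.BilinForm.toMatrix bH) hforms
    rwa [LinearMap.BilinForm.toMatrix_compLeft, LinearMap.BilinForm.toMatrix_compRight] at this
  have hnr : ∀ lam : ℝ, (MK - lam • 1).det ≠ 0 := by
    intro lam
    set φ : H →ₗ[ℝ] H := Kop - lam • (LinearMap.id : H →ₗ[ℝ] H) with hφ
    have hmat : MK - lam • 1 = LinearMap.toMatrix bH bH φ := by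
      rw [hφ, _root_.map_sub, _root_.map_smul, LinearMap.toMatrix_id]
    rw [hmat, LinearMap.det_toMatrix]
    have hinj : ∀ m : H, φ m = 0 → m = 0 := by
      intro m hm
      apply hKnoeig lam
      have h : Kop m - lam • m = 0 := by
        simpa [hφ, LinearMap.sub_apply] using hm
      rw [sub_eq_zero] at h
      exact h
    exact ((LinearMap.not_hasEigenvalue_zero_tfae φ).out 3 5).mpr hinj
  exact core_real C MK hCskew hCdet hsa hnr
end
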